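/- Let n, N and n₁,…,n_N be positive integers and let f : ℝ^n × ℝ^{n₁} × … × ℝ^{n_N} → ℝ^n. Suppose there exist a continuously differentiable V : ℝ^n → [0,∞) and class-K∞ functions α̲_V, ᾱ_V, α, γ₁,…,γ_N such that for all x ∈ ℝ^n and all uᵢ ∈ ℝ^{n_i}: α̲_V(|x|) ≤ V(x) ≤ ᾱ_V(|x|) and ⟨∇V(x), f(x,u₁,…,u_N)⟩ ≤ −α(|x|) + Σ_{i=1}^N γᵢ(|uᵢ|). Let γ̃₁,…,γ̃_N be class-K∞ functions such that for each i, γᵢ(r) = O(γ̃ᵢ(r)) as r → ∞ (i.e., there exist Mᵢ > 0 and rᵢ ≥ 0 with γᵢ(r) ≤ Mᵢ·γ̃ᵢ(r) for all r ≥ rᵢ). Then there exist a continuously differentiable W : ℝ^n → [0,∞) and class-K∞ functions α̲_W, ᾱ_W, α̃ such that for all x ∈ ℝ^n and all uᵢ ∈ ℝ^{n_i}: α̲_W(|x|) ≤ W(x) ≤ ᾱ_W(|x|) and ⟨∇W(x), f(x,u₁,…,u_N)⟩ ≤ −α̃(|x|) + Σ_{i=1}^N γ̃ᵢ(|uᵢ|).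 -/

import Mathlib

open Real Filter MeasureTheory

/-- A class-K∞ function: continuous, strictly increasing and unbounded on `[0,∞)`
with value `0` at `0`. -/
def ClassKInf (f : ℝ → ℝ) : Prop :=
  ContinuousOn f (Set.Ici 0) ∧ StrictMonoOn f (Set.Ici 0) ∧ f 0 = 0 ∧
  Filter.Tendsto f Filter.atTop Filter.atTop

namespace Stmt9Aux

lemma kinf_pos {g : ℝ → ℝ} (hg : ClassKInf g) {r : ℝ} (hr : 0 < r) : 0 < g r := by
  have := hg.2.1 (Set.self_mem_Ici) (Set.mem_Ici.mpr hr.le) hr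
  rwa [hg.2.2.1] at this

lemma kinf_nonneg {g : ℝ → ℝ} (hg : ClassKInf g) {r : ℝ} (hr : 0 ≤ r) : 0 ≤ g r := by
  rcases eq_or_lt_of_le hr with h | h
  · rw [← h, hg.2.2.1]
  · exact (kinf_pos hg h).le

lemma kinf_mono {g : ℝ → ℝ} (hg : ClassKInf g) {a b : ℝ} (ha : 0 ≤ a) (hab : a ≤ b) :
    g a ≤ g b :=
  hg.2.1.monotoneOn (Set.mem_Ici.mpr ha) (Set.mem_Ici.mpr (ha.trans hab)) hab

lemma kinf_le_le {g : ℝ → ℝ} (hg : ClassKInf g) {a b : ℝ} (ha : 0 ≤ a) (hb : 0 ≤ b)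
    (h : g a ≤ g b) : a ≤ b := by
  by_contra hc
  push_neg at hc
  exact absurd h (not_le.mpr (hg.2.1 (Set.mem_Ici.mpr hb) (Set.mem_Ici.mpr ha) hc))

lemma kinf_surj {g : ℝ → ℝ} (hg : ClassKInf g) {y : ℝ} (hy : 0 ≤ y) :
    ∃ s, 0 ≤ s ∧ g s = y := by
  obtain ⟨B, hB1, hB2⟩ := ((hg.2.2.2.eventually_ge_atTop y).and (eventually_ge_atTop 0)).exists
  have hsub : Set.Icc (0:ℝ) B ⊆ Set.Ici 0 := Set.Icc_subset_Ici_self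
  have := intermediate_value_Icc hB2 (hg.1.mono hsub)
  have hmem : y ∈ Set.Icc (g 0) (g B) := by
    rw [hg.2.2.1]; exact ⟨hy, hB1⟩
  obtain ⟨s, hs, hgs⟩ := this hmem
  exact ⟨s, hs.1, hgs⟩

lemma exists_p (N : ℕ) (hN : 0 < N) (αupV α : ℝ → ℝ) (γ γt : Fin N → ℝ → ℝ)
    (hαupV : ClassKInf αupV) (hα : ClassKInf α)
    (hγ : ∀ i, ClassKInf (γ i)) (hγt : ∀ i, ClassKInf (γt i))
    (hO : ∀ i, ∃ M > (0:ℝ), ∃ r₀ ≥ (0:ℝ), ∀ r ≥ r₀, γ i r ≤ M * γt i r) :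
    ∃ p : ℝ → ℝ, Continuous p ∧ Monotone p ∧ (∀ s, 0 ≤ p s) ∧ (∀ s, 0 < s → 0 < p s) ∧
      (∀ (i : Fin N) (r s : ℝ), 0 ≤ r → 0 ≤ s → α s ≤ 2*N*γ i r →
        2 * p (αupV s) * γ i r ≤ γt i r) := by
  haveI : Nonempty (Fin N) := Fin.pos_iff_nonempty.mp hN
  choose M hM r0 hr0 hMr using hO
  set c : ℝ := Finset.univ.inf' Finset.univ_nonempty (fun i => 1/(2*M i)) with hc_def
  have hc_pos : 0 < c := by
    rw [hc_def, Finset.lt_inf'_iff]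
    intro i _
    have := hM i
    positivity
  have hc_le : ∀ i, c ≤ 1/(2*M i) := fun i =>
    Finset.inf'_le _ (Finset.mem_univ i)
  set rb : ℝ := max 1 (Finset.univ.sup' Finset.univ_nonempty r0) with hrb_def
  have hrb1 : (1:ℝ) ≤ rb := le_max_left _ _
  have hrb_pos : (0:ℝ) < rb := lt_of_lt_of_le one_pos hrb1
  have hrb_ge : ∀ i, r0 i ≤ rb :=
    fun i => (Finset.le_sup' r0 (Finset.mem_univ i)).trans (le_max_right _ _)
  -- the constraint set
  set S : ℝ → Set ℝ := fun v => {y | ∃ i : Fin N, ∃ r s : ℝ, 0 < r ∧ r ≤ rb ∧ 0 ≤ s ∧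
    v ≤ αupV s ∧ α s ≤ 2*N*γ i r ∧ y = γt i r / (2 * γ i r)} with hS_def
  have hS_nonneg : ∀ v, ∀ y ∈ insert c (S v), (0:ℝ) ≤ y := by
    intro v y hy
    rcases Set.mem_insert_iff.mp hy with h | h
    · rw [h]; exact hc_pos.le
    · obtain ⟨i, r, s, hr, _, _, _, _, hy'⟩ := h
      rw [hy']
      have h1 : 0 ≤ γt i r := kinf_nonneg (hγt i) hr.le
      have h2 : 0 < γ i r := kinf_pos (hγ i) hr
      positivity
  have hbdd : ∀ v, BddBelow (insert c (S v)) := fun v => ⟨0, fun y hy => hS_nonneg v y hy⟩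
  set q : ℝ → ℝ := fun v => sInf (insert c (S v)) with hq_def
  have hq_nonneg : ∀ v, 0 ≤ q v := fun v =>
    le_csInf (Set.insert_nonempty _ _) (hS_nonneg v)
  have hq_le_c : ∀ v, q v ≤ c := fun v => csInf_le (hbdd v) (Set.mem_insert _ _)
  have hq_mono : Monotone q := by
    intro a b hab
    apply csInf_le_csInf (hbdd a) (Set.insert_nonempty _ _)
    apply Set.insert_subset_insert
    intro y hy
    obtain ⟨i, r, s, h1, h2, h3, h4, h5, h6⟩ := hy
    exact ⟨i, r, s, h1, h2, h3, hab.trans h4, h5, h6⟩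
  have hq_constraint : ∀ (i : Fin N) (r s : ℝ), 0 < r → r ≤ rb → 0 ≤ s →
      α s ≤ 2*N*γ i r → q (αupV s) ≤ γt i r / (2 * γ i r) := by
    intro i r s h1 h2 h3 h4
    exact csInf_le (hbdd _) (Set.mem_insert_of_mem _ ⟨i, r, s, h1, h2, h3, le_refl _, h4, rfl⟩)
  have hq_pos : ∀ v, 0 < v → 0 < q v := by
    intro v hv
    obtain ⟨s₀, hs₀, hgs₀⟩ := kinf_surj hαupV hv.le
    have hs₀pos : 0 < s₀ := by
      rcases eq_or_lt_of_le hs₀ with h | h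
      · exfalso; rw [← h, hαupV.2.2.1] at hgs₀; linarith
      · exact h
    set δ : ℝ := α s₀ / (2*N) with hδ_def
    have hNpos : (0:ℝ) < N := Nat.cast_pos.mpr hN
    have hδpos : 0 < δ := by
      have := kinf_pos hα hs₀pos
      positivity
    -- for each i choose ε i with γ i (ε i) = min δ (γ i rb)
    have hε : ∀ i : Fin N, ∃ e, 0 < e ∧ e ≤ rb ∧ γ i e = min δ (γ i rb) := by
      intro i
      have hγrb : 0 < γ i rb := kinf_pos (hγ i) hrb_pos
      have hy : min δ (γ i rb) ∈ Set.Icc (γ i 0) (γ i rb) := by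
        rw [(hγ i).2.2.1]
        exact ⟨le_min hδpos.le hγrb.le, min_le_right _ _⟩
      obtain ⟨e, he, hge⟩ := intermediate_value_Icc hrb_pos.le
        ((hγ i).1.mono Set.Icc_subset_Ici_self) hy
      refine ⟨e, ?_, he.2, hge⟩
      rcases eq_or_lt_of_le he.1 with h | h
      · exfalso
        rw [← h, (hγ i).2.2.1] at hge
        have : 0 < min δ (γ i rb) := lt_min hδpos hγrb
        linarith
      · exact h
    choose ε hε1 hε2 hε3 using hε
    set m : ℝ := min c (Finset.univ.inf' Finset.univ_nonempty
      (fun i => γt i (ε i) / (2 * γ i rb))) with hm_def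
    have hm_pos : 0 < m := by
      rw [hm_def, lt_min_iff]
      refine ⟨hc_pos, ?_⟩
      rw [Finset.lt_inf'_iff]
      intro i _
      have h1 : 0 < γt i (ε i) := kinf_pos (hγt i) (hε1 i)
      have h2 : 0 < γ i rb := kinf_pos (hγ i) hrb_pos
      positivity
    refine lt_of_lt_of_le hm_pos (le_csInf (Set.insert_nonempty _ _) ?_)
    intro y hy
    rcases Set.mem_insert_iff.mp hy with h | h
    · rw [h, hm_def]; exact min_le_left _ _
    · obtain ⟨i, r, s, h1, h2, h3, h4, h5, h6⟩ := h
      rw [h6]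
      -- from v ≤ αupV s and αupV s₀ = v : s₀ ≤ s, hence δ ≤ γ i r
      have hss : s₀ ≤ s := by
        apply kinf_le_le hαupV hs₀ h3
        rw [hgs₀]; exact h4
      have hαs : α s₀ ≤ α s := kinf_mono hα hs₀ hss
      have hδγ : δ ≤ γ i r := by
        rw [hδ_def]
        rw [div_le_iff₀ (by positivity)]
        calc α s₀ ≤ α s := hαs
          _ ≤ 2*N*γ i r := h5
          _ = γ i r * (2*N) := by ring
      have hεr : ε i ≤ r := by
        apply kinf_le_le (hγ i) (hε1 i).le h1.le
        rw [hε3 i]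
        exact le_trans (min_le_left _ _) hδγ
      have hγtle : γt i (ε i) ≤ γt i r := kinf_mono (hγt i) (hε1 i).le hεr
      have hγle : γ i r ≤ γ i rb := kinf_mono (hγ i) h1.le h2
      have h2γ : 0 < γ i r := kinf_pos (hγ i) h1
      have h2γb : 0 < γ i rb := kinf_pos (hγ i) hrb_pos
      calc m ≤ γt i (ε i) / (2 * γ i rb) :=
            le_trans (min_le_right _ _) (Finset.inf'_le _ (Finset.mem_univ i))
        _ ≤ γt i r / (2 * γ i r) := by
            apply div_le_div₀ (kinf_nonneg (hγt i) h1.le) hγtle (by positivity)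
            linarith
  -- Lipschitz regularization
  set p : ℝ → ℝ := fun s => ⨅ t : ℝ, (q t + |s - t|) with hp_def
  have hbddp : ∀ s : ℝ, BddBelow (Set.range fun t => q t + |s - t|) := by
    intro s
    refine ⟨0, ?_⟩
    rintro y ⟨t, rfl⟩
    have := hq_nonneg t
    positivity
  have hp_le_q : ∀ s, p s ≤ q s := by
    intro s
    have := ciInf_le (hbddp s) s
    simpa using this
  have hp_nonneg : ∀ s, 0 ≤ p s := by
    intro s
    apply le_ciInf
    intro t
    have := hq_nonneg t
    positivity
  have hp_mono : Monotone p := by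
    intro a b hab
    apply le_ciInf
    intro t
    rcases le_or_gt t a with h | h
    · calc p a ≤ q t + |a - t| := ciInf_le (hbddp a) t
        _ ≤ q t + |b - t| := by
            have h1 : |a - t| = a - t := abs_of_nonneg (by linarith)
            have h2 : |b - t| = b - t := abs_of_nonneg (by linarith)
            linarith
    · calc p a ≤ q a := hp_le_q a
        _ ≤ q t := hq_mono h.le
        _ ≤ q t + |b - t| := by linarith [abs_nonneg (b - t)]
  have hp_pos : ∀ s, 0 < s → 0 < p s := by
    intro s hs
    have hlb : min (q (s/2)) (s/2) ≤ p s := by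
      apply le_ciInf
      intro t
      rcases le_or_gt (s/2) t with h | h
      · calc min (q (s/2)) (s/2) ≤ q (s/2) := min_le_left _ _
          _ ≤ q t := hq_mono h
          _ ≤ q t + |s - t| := by linarith [abs_nonneg (s - t)]
      · calc min (q (s/2)) (s/2) ≤ s/2 := min_le_right _ _
          _ ≤ |s - t| := by
              rw [abs_of_nonneg (by linarith)]
              linarith
          _ ≤ q t + |s - t| := by
              have := hq_nonneg t
              linarith
    exact lt_of_lt_of_le (lt_min (hq_pos _ (by linarith)) (by linarith)) hlb
  have hp_cont : Continuous p := by
    have hlip : LipschitzWith 1 p := by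
      apply LipschitzWith.of_dist_le_mul
      intro x y
      rw [Real.dist_eq, Real.dist_eq, NNReal.coe_one, one_mul]
      rw [abs_sub_le_iff]
      constructor
      · have : ∀ t : ℝ, p x - |x - y| ≤ q t + |y - t| := by
          intro t
          have h1 : p x ≤ q t + |x - t| := ciInf_le (hbddp x) t
          have h2 : |x - t| ≤ |x - y| + |y - t| := abs_sub_le x y t
          linarith
        have := le_ciInf this
        linarith
      · have : ∀ t : ℝ, p y - |x - y| ≤ q t + |x - t| := by
          intro t
          have h1 : p y ≤ q t + |y - t| := ciInf_le (hbddp y) t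
          have h2 : |y - t| ≤ |y - x| + |x - t| := abs_sub_le y x t
          rw [abs_sub_comm y x] at h2
          linarith
        have := le_ciInf this
        linarith
    exact hlip.continuous
  refine ⟨p, hp_cont, hp_mono, hp_nonneg, hp_pos, ?_⟩
  intro i r s hr hs hαγ
  rcases eq_or_lt_of_le hr with h | hrpos
  · rw [← h, (hγ i).2.2.1, (hγt i).2.2.1]
    ring_nf
    exact le_refl _
  · have hγpos : 0 < γ i r := kinf_pos (hγ i) hrpos
    have hγtpos : 0 < γt i r := kinf_pos (hγt i) hrpos
    rcases le_or_gt r rb with hcase | hcase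
    · have h1 : q (αupV s) ≤ γt i r / (2 * γ i r) := hq_constraint i r s hrpos hcase hs hαγ
      have h2 : p (αupV s) ≤ γt i r / (2 * γ i r) := (hp_le_q _).trans h1
      rw [le_div_iff₀ (by positivity)] at h2
      linarith [h2]
    · have h1 : γ i r ≤ M i * γt i r := hMr i r ((hrb_ge i).trans hcase.le)
      have h2 : p (αupV s) ≤ 1/(2*M i) := (hp_le_q _).trans ((hq_le_c _).trans (hc_le i))
      have hMi := hM i
      have h3 : 0 ≤ p (αupV s) := hp_nonneg _
      rw [le_div_iff₀ (by positivity)] at h2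
      have h5 := mul_le_mul_of_nonneg_left h1 (by positivity : (0:ℝ) ≤ 2 * p (αupV s))
      have h6 := mul_le_mul_of_nonneg_right h2 hγtpos.le
      calc 2 * p (αupV s) * γ i r ≤ 2 * p (αupV s) * (M i * γt i r) := h5
        _ = (p (αupV s) * (2 * M i)) * γt i r := by ring
        _ ≤ 1 * γt i r := h6
        _ = γt i r := one_mul _

lemma exists_rho (p : ℝ → ℝ) (hc : Continuous p) (hm : Monotone p)
    (hpos : ∀ s, 0 < s → 0 < p s) :
    ∃ ρ : ℝ → ℝ, ContDiff ℝ 1 ρ ∧ (∀ s, HasDerivAt ρ (p s) s) ∧ ρ 0 = 0 ∧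
      StrictMonoOn ρ (Set.Ici 0) ∧ Tendsto ρ atTop atTop := by
  set ρ : ℝ → ℝ := fun s => ∫ t in (0:ℝ)..s, p t with hρ
  have hderiv : ∀ s, HasDerivAt ρ (p s) s := fun s =>
    (hc.integral_hasStrictDerivAt 0 s).hasDerivAt
  have hcd : ContDiff ℝ 1 ρ := by
    rw [contDiff_one_iff_deriv]
    refine ⟨fun s => (hderiv s).differentiableAt, ?_⟩
    have : deriv ρ = p := funext fun s => (hderiv s).deriv
    rw [this]; exact hc
  have hsub : ∀ a b : ℝ, ρ b - ρ a = ∫ t in a..b, p t := by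
    intro a b
    rw [hρ]
    simp only
    rw [← intervalIntegral.integral_interval_sub_left (hc.intervalIntegrable 0 b)
      (hc.intervalIntegrable 0 a)]
  have hmono : StrictMonoOn ρ (Set.Ici 0) := by
    intro a ha b hb hab
    have hpos' : (0:ℝ) < ∫ t in a..b, p t := by
      apply intervalIntegral.intervalIntegral_pos_of_pos_on (hc.intervalIntegrable a b)
      · intro x hx
        exact hpos x (lt_of_le_of_lt (Set.mem_Ici.mp ha) hx.1)
      · exact hab
    have := hsub a b
    linarith
  refine ⟨ρ, hcd, hderiv, by simp [hρ], hmono, ?_⟩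
  have hlb : ∀ s ≥ (1:ℝ), ρ 1 + p 1 * (s - 1) ≤ ρ s := by
    intro s hs
    have h1 : ∫ t in (1:ℝ)..s, p 1 ≤ ∫ t in (1:ℝ)..s, p t := by
      apply intervalIntegral.integral_mono_on hs (intervalIntegrable_const)
        (hc.intervalIntegrable 1 s)
      intro x hx
      exact hm hx.1
    rw [intervalIntegral.integral_const, smul_eq_mul] at h1
    have := hsub 1 s
    linarith
  have hp1 : 0 < p 1 := hpos 1 one_pos
  have htend : Tendsto (fun s : ℝ => ρ 1 + p 1 * (s - 1)) atTop atTop := by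
    apply tendsto_atTop_add_const_left
    exact (tendsto_atTop_add_const_right _ _ tendsto_id).const_mul_atTop hp1
  exact tendsto_atTop_mono' atTop (eventually_atTop.mpr ⟨1, hlb⟩) htend

end Stmt9Aux

/-- Lemma 2 (Appendix) of the paper: multiple-input change of supply rates for
ISS-Lyapunov functions. If the gains `γ̃ᵢ` dominate `γᵢ` at infinity, then there is
a new continuously differentiable ISS-Lyapunov function `W` with supply rates
`γ̃ᵢ` and some new decay rate `α̃`. -/
theorem stmt9 (n N : ℕ) (hn : 0 < n) (hN : 0 < N) (nu : Fin N → ℕ)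
    (hnu : ∀ i, 0 < nu i)
    (f : EuclideanSpace ℝ (Fin n) →
      (∀ i : Fin N, EuclideanSpace ℝ (Fin (nu i))) → EuclideanSpace ℝ (Fin n))
    (V : EuclideanSpace ℝ (Fin n) → ℝ) (hV1 : ContDiff ℝ 1 V) (hV0 : ∀ x, 0 ≤ V x)
    (αlowV αupV α : ℝ → ℝ) (γ : Fin N → ℝ → ℝ)
    (hαlowV : ClassKInf αlowV) (hαupV : ClassKInf αupV) (hα : ClassKInf α)
    (hγ : ∀ i, ClassKInf (γ i))
    (hVb : ∀ x, αlowV ‖x‖ ≤ V x ∧ V x ≤ αupV ‖x‖)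
    (hVflow : ∀ (x : EuclideanSpace ℝ (Fin n))
      (u : ∀ i : Fin N, EuclideanSpace ℝ (Fin (nu i))),
      fderiv ℝ V x (f x u) ≤ -α ‖x‖ + ∑ i, γ i ‖u i‖)
    (γt : Fin N → ℝ → ℝ) (hγt : ∀ i, ClassKInf (γt i))
    (hO : ∀ i, ∃ M > (0:ℝ), ∃ r₀ ≥ (0:ℝ), ∀ r ≥ r₀, γ i r ≤ M * γt i r) :
    ∃ (W : EuclideanSpace ℝ (Fin n) → ℝ) (αlowW αupW αt : ℝ → ℝ),
      ContDiff ℝ 1 W ∧ (∀ x, 0 ≤ W x) ∧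
      ClassKInf αlowW ∧ ClassKInf αupW ∧ ClassKInf αt ∧
      (∀ x, αlowW ‖x‖ ≤ W x ∧ W x ≤ αupW ‖x‖) ∧
      (∀ (x : EuclideanSpace ℝ (Fin n))
        (u : ∀ i : Fin N, EuclideanSpace ℝ (Fin (nu i))),
        fderiv ℝ W x (f x u) ≤ -αt ‖x‖ + ∑ i, γt i ‖u i‖) := by
  haveI : Nonempty (Fin N) := Fin.pos_iff_nonempty.mp hN
  obtain ⟨p, hp_cont, hp_mono, hp_nonneg, hp_pos, hp_key⟩ :=
    Stmt9Aux.exists_p N hN αupV α γ γt hαupV hα hγ hγt hO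
  obtain ⟨ρ, hρ_cd, hρ_deriv, hρ0, hρ_smono, hρ_top⟩ :=
    Stmt9Aux.exists_rho p hp_cont hp_mono hp_pos
  have hρ_mono : MonotoneOn ρ (Set.Ici 0) := hρ_smono.monotoneOn
  have hNpos : (0:ℝ) < N := Nat.cast_pos.mpr hN
  -- composition with ρ preserves class-K∞
  have comp_kinf : ∀ g : ℝ → ℝ, ClassKInf g → ClassKInf (fun t => ρ (g t)) := by
    intro g hg
    refine ⟨hρ_cd.continuous.comp_continuousOn hg.1, ?_, ?_, hρ_top.comp hg.2.2.2⟩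
    · intro a ha b hb hab
      exact hρ_smono (Set.mem_Ici.mpr (Stmt9Aux.kinf_nonneg hg ha))
        (Set.mem_Ici.mpr (Stmt9Aux.kinf_nonneg hg hb)) (hg.2.1 ha hb hab)
    · show ρ (g 0) = 0
      rw [hg.2.2.1, hρ0]
  set W : EuclideanSpace ℝ (Fin n) → ℝ := fun x => ρ (V x) with hW_def
  set αt : ℝ → ℝ := fun t => p (αlowV t) * α t / 2 with hαt_def
  have hαt_kinf : ClassKInf αt := by
    refine ⟨((hp_cont.comp_continuousOn hαlowV.1).mul hα.1).div_const 2, ?_, ?_, ?_⟩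
    · intro a ha b hb hab
      have h1 : p (αlowV a) ≤ p (αlowV b) :=
        hp_mono (Stmt9Aux.kinf_mono hαlowV ha hab.le)
      have h2 : 0 ≤ α a := Stmt9Aux.kinf_nonneg hα ha
      have h3 : α a < α b := hα.2.1 ha hb hab
      have h4 : 0 < p (αlowV b) :=
        hp_pos _ (Stmt9Aux.kinf_pos hαlowV (lt_of_le_of_lt (Set.mem_Ici.mp ha) hab))
      have h5 : 0 ≤ p (αlowV a) := hp_nonneg _
      show p (αlowV a) * α a / 2 < p (αlowV b) * α b / 2
      nlinarith [mul_le_mul_of_nonneg_right h1 h2, mul_lt_mul_of_pos_left h3 h4]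
    · show p (αlowV 0) * α 0 / 2 = 0
      rw [hα.2.2.1]; ring
    · have hconst : 0 < p (αlowV 1) := hp_pos _ (Stmt9Aux.kinf_pos hαlowV one_pos)
      have htend : Tendsto (fun t => p (αlowV 1) * α t / 2) atTop atTop :=
        (hα.2.2.2.const_mul_atTop hconst).atTop_div_const two_pos
      apply tendsto_atTop_mono' atTop _ htend
      filter_upwards [eventually_ge_atTop (1:ℝ)] with t ht
      have h1 : p (αlowV 1) ≤ p (αlowV t) :=
        hp_mono (Stmt9Aux.kinf_mono hαlowV zero_le_one ht)
      have h2 : 0 ≤ α t := Stmt9Aux.kinf_nonneg hα (zero_le_one.trans ht)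
      have := mul_le_mul_of_nonneg_right h1 h2
      show p (αlowV 1) * α t / 2 ≤ p (αlowV t) * α t / 2
      linarith
  -- derivative of W
  have hWd : ∀ x, fderiv ℝ W x = p (V x) • fderiv ℝ V x := by
    intro x
    have hVd : HasFDerivAt V (fderiv ℝ V x) x :=
      (hV1.differentiable one_ne_zero x).hasFDerivAt
    have := (hρ_deriv (V x)).comp_hasFDerivAt x hVd
    exact this.fderiv
  refine ⟨W, fun t => ρ (αlowV t), fun t => ρ (αupV t), αt,
    hρ_cd.comp hV1, ?_, comp_kinf _ hαlowV, comp_kinf _ hαupV, hαt_kinf, ?_, ?_⟩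
  · intro x
    have : ρ 0 ≤ ρ (V x) := hρ_mono Set.self_mem_Ici (Set.mem_Ici.mpr (hV0 x)) (hV0 x)
    rwa [hρ0] at this
  · intro x
    have h1 := (hVb x).1
    have h2 := (hVb x).2
    have hlnn : 0 ≤ αlowV ‖x‖ := Stmt9Aux.kinf_nonneg hαlowV (norm_nonneg x)
    constructor
    · exact hρ_mono (Set.mem_Ici.mpr hlnn) (Set.mem_Ici.mpr (hV0 x)) h1
    · exact hρ_mono (Set.mem_Ici.mpr (hV0 x)) (Set.mem_Ici.mpr ((hV0 x).trans h2)) h2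
  · intro x u
    have hs : (0:ℝ) ≤ ‖x‖ := norm_nonneg x
    have hα_nn : 0 ≤ α ‖x‖ := Stmt9Aux.kinf_nonneg hα hs
    have hplow : p (αlowV ‖x‖) ≤ p (V x) := hp_mono (hVb x).1
    have hpup : p (V x) ≤ p (αupV ‖x‖) := hp_mono (hVb x).2
    -- per-input claim (scaled by N)
    have hclaim : ∀ i : Fin N,
        p (V x) * (-α ‖x‖ + (N:ℝ) * γ i ‖u i‖) ≤
          -(p (αlowV ‖x‖) * α ‖x‖ / 2) + (N:ℝ) * γt i ‖u i‖ := by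
      intro i
      have hr : (0:ℝ) ≤ ‖u i‖ := norm_nonneg _
      have hg_nn : 0 ≤ γ i ‖u i‖ := Stmt9Aux.kinf_nonneg (hγ i) hr
      have hG_nn : 0 ≤ γt i ‖u i‖ := Stmt9Aux.kinf_nonneg (hγt i) hr
      rcases le_or_gt (2 * (N:ℝ) * γ i ‖u i‖) (α ‖x‖) with hcase | hcase
      · nlinarith [mul_le_mul_of_nonneg_left hcase (hp_nonneg (V x)),
          mul_le_mul_of_nonneg_right hplow hα_nn,
          mul_nonneg hNpos.le hG_nn]
      · have hkey2 : 2 * p (αupV ‖x‖) * γ i ‖u i‖ ≤ γt i ‖u i‖ :=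
          hp_key i ‖u i‖ ‖x‖ hr hs hcase.le
        have hBP : p (αlowV ‖x‖) ≤ p (αupV ‖x‖) := hplow.trans hpup
        nlinarith [mul_le_mul_of_nonneg_left hkey2 hNpos.le,
          mul_nonneg (hp_nonneg (V x)) hα_nn,
          mul_le_mul_of_nonneg_left hpup (mul_nonneg hNpos.le hg_nn),
          mul_le_mul_of_nonneg_right hBP hα_nn,
          mul_le_mul_of_nonneg_left hcase.le (hp_nonneg (αupV ‖x‖))]
    have hsum : (N:ℝ) * (p (V x) * (-α ‖x‖ + ∑ i, γ i ‖u i‖)) ≤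
        (N:ℝ) * (-(p (αlowV ‖x‖) * α ‖x‖ / 2) + ∑ i, γt i ‖u i‖) := by
      have e1 : ∑ i : Fin N, (p (V x) * (-α ‖x‖ + (N:ℝ) * γ i ‖u i‖)) =
          (N:ℝ) * (p (V x) * (-α ‖x‖ + ∑ i, γ i ‖u i‖)) := by
        simp only [mul_add, Finset.sum_add_distrib, Finset.sum_const, Finset.card_univ,
          Fintype.card_fin, nsmul_eq_mul, ← Finset.mul_sum]
        ring
      have e2 : ∑ i : Fin N, (-(p (αlowV ‖x‖) * α ‖x‖ / 2) + (N:ℝ) * γt i ‖u i‖) =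
          (N:ℝ) * (-(p (αlowV ‖x‖) * α ‖x‖ / 2) + ∑ i, γt i ‖u i‖) := by
        simp only [Finset.sum_add_distrib, Finset.sum_const, Finset.card_univ,
          Fintype.card_fin, nsmul_eq_mul, ← Finset.mul_sum]
        ring
      rw [← e1, ← e2]
      exact Finset.sum_le_sum fun i _ => hclaim i
    have hmain : p (V x) * (-α ‖x‖ + ∑ i, γ i ‖u i‖) ≤
        -(p (αlowV ‖x‖) * α ‖x‖ / 2) + ∑ i, γt i ‖u i‖ :=
      le_of_mul_le_mul_left hsum hNpos
    have hfd : fderiv ℝ W x (f x u) = p (V x) * fderiv ℝ V x (f x u) := by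
      rw [hWd x]
      simp [ContinuousLinearMap.smul_apply, smul_eq_mul]
    rw [hfd]
    calc p (V x) * fderiv ℝ V x (f x u)
        ≤ p (V x) * (-α ‖x‖ + ∑ i, γ i ‖u i‖) :=
          mul_le_mul_of_nonneg_left (hVflow x u) (hp_nonneg (V x))
      _ ≤ -(p (αlowV ‖x‖) * α ‖x‖ / 2) + ∑ i, γt i ‖u i‖ := hmain
      _ = -αt ‖x‖ + ∑ i, γt i ‖u i‖ := rfl
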